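/- Let a₁, …, a_m ∈ ℝⁿ. The set { Σᵢ₌₁^m tᵢaᵢ − p : t₁, …, t_m ∈ ℝ, p ∈ ℤⁿ } is dense in ℝⁿ if and only if there is no nonzero integer vector r ∈ ℤⁿ such that ⟨r, aᵢ⟩ = 0 for all i = 1, …, m. Equivalently, the projection to the torus Tⁿ = ℝⁿ/ℤⁿ of the linear span of a₁, …, a_m is dense in Tⁿ if and only if no nonzero integer vector is orthogonal to all the aᵢ. -/

import Mathlib

open Matrix Polynomial
open scoped Classical

noncomputable section

/-- The `n`-torus `ℝⁿ/ℤⁿ`, realized as `Fin n → ℝ/ℤ`. -/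
abbrev Torus (n : ℕ) := Fin n → AddCircle (1 : ℝ)

/-- The projection `p : ℝⁿ → Tⁿ`. -/
def torusProj (n : ℕ) (x : Fin n → ℝ) : Torus n := fun i => (x i : AddCircle (1 : ℝ))

/-- The linear action of an integer matrix on `ℝⁿ`. -/
def realMulVec {n : ℕ} (A : Matrix (Fin n) (Fin n) ℤ) (x : Fin n → ℝ) : Fin n → ℝ :=
  (A.map (Int.cast : ℤ → ℝ)).mulVec x

/-- The complex eigenvalues (with multiplicity) of an integer matrix. -/
def eigsC {n : ℕ} (A : Matrix (Fin n) (Fin n) ℤ) : Multiset ℂ :=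
  ((A.map (Int.cast : ℤ → ℂ)).charpoly).roots

/-- A complex number is a root of unity if some positive power of it is `1`. -/
def IsRootOfUnity (z : ℂ) : Prop := ∃ k : ℕ, 1 ≤ k ∧ z ^ k = 1
namespace DenseAux

open MeasureTheory MeasureTheory.Measure Complex Set Function Submodule

instance : Fact ((0:ℝ) < 1) := ⟨one_pos⟩

variable {n m : ℕ}

/-- The character of the torus associated to an integer vector. -/
def eChar (r : Fin n → ℤ) : C(Torus n, ℂ) :=
  ⟨fun x => ∏ j, fourier (r j) (x j),
   continuous_finset_prod _ fun j _ => (fourier (r j)).continuous.comp (continuous_apply j)⟩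

lemma eChar_apply (r : Fin n → ℤ) (x : Torus n) : eChar r x = ∏ j, fourier (r j) (x j) := rfl

lemma fourier_pt_add {k : ℤ} {a b : AddCircle (1:ℝ)} :
    fourier k (a + b) = fourier k a * fourier k b := by
  simp_rw [fourier_apply, smul_add, AddCircle.toCircle_add, Circle.coe_mul]

lemma eChar_add (r : Fin n → ℤ) (x y : Torus n) :
    eChar r (x + y) = eChar r x * eChar r y := by
  simp only [eChar_apply, Pi.add_apply, ← Finset.prod_mul_distrib]
  exact Finset.prod_congr rfl fun j _ => fourier_pt_add

lemma eChar_mul (r s : Fin n → ℤ) : eChar r * eChar s = eChar (r + s) := by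
  ext x
  simp only [ContinuousMap.mul_apply, eChar_apply, ← Finset.prod_mul_distrib]
  exact Finset.prod_congr rfl fun j _ => by rw [Pi.add_apply, fourier_add]

lemma eChar_zero' : eChar (0 : Fin n → ℤ) = 1 := by
  ext x; simp only [eChar_apply, Pi.zero_apply, fourier_zero, Finset.prod_const_one,
    ContinuousMap.one_apply]

lemma eChar_neg (r : Fin n → ℤ) : eChar (-r) = star (eChar r) := by
  ext x
  show (∏ j, fourier ((-r) j) (x j)) = star (∏ j, fourier (r j) (x j))
  rw [star_prod]
  exact Finset.prod_congr rfl fun j _ => by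
    rw [Pi.neg_apply, fourier_neg]; rfl

lemma eChar_proj (r : Fin n → ℤ) (x : Fin n → ℝ) :
    eChar r (torusProj n x) =
      Complex.exp (2 * Real.pi * I * (∑ j, (r j : ℝ) * x j)) := by
  simp_rw [eChar_apply, torusProj, fourier_coe_apply, ← Complex.exp_sum]
  congr 1
  push_cast
  rw [Finset.mul_sum]
  refine Finset.sum_congr rfl fun j _ => by ring

lemma eChar_proj_half {r : Fin n → ℤ} {x : Fin n → ℝ}
    (h : ∑ j, (r j : ℝ) * x j = 1/2) : eChar r (torusProj n x) = -1 := by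
  rw [eChar_proj, h]
  push_cast
  rw [show (2 * (Real.pi:ℂ) * I * (1/2 : ℂ)) = (Real.pi:ℂ) * I by ring]
  exact Complex.exp_pi_mul_I

lemma sum_smul_half {r : Fin n → ℤ} {y : Fin n → ℝ} (hc : ∑ k, (r k:ℝ) * y k ≠ 0) :
    ∑ j, (r j : ℝ) * ((1 / (2 * ∑ k, (r k:ℝ) * y k)) • y) j = 1/2 := by
  set c := ∑ k, (r k:ℝ) * y k with hc'
  simp only [Pi.smul_apply, smul_eq_mul]
  have : ∀ j ∈ Finset.univ, (r j:ℝ) * ((1/(2*c)) * y j) = (1/(2*c)) * ((r j:ℝ) * y j) :=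
    fun j _ => by ring
  rw [Finset.sum_congr rfl this, ← Finset.mul_sum, ← hc']
  field_simp

/-- The star subalgebra generated by characters. -/
def eCharAlg (n : ℕ) : StarSubalgebra ℂ C(Torus n, ℂ) where
  toSubalgebra := Algebra.adjoin ℂ (Set.range (eChar (n := n)))
  star_mem' := by
    show Algebra.adjoin ℂ (Set.range (eChar (n := n))) ≤
      star (Algebra.adjoin ℂ (Set.range (eChar (n := n))))
    refine Algebra.adjoin_le ?_
    rintro - ⟨r, rfl⟩
    exact Algebra.subset_adjoin ⟨-r, eChar_neg r⟩

lemma eCharAlg_coe (n : ℕ) :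
    Subalgebra.toSubmodule (eCharAlg n).toSubalgebra = span ℂ (Set.range (eChar (n := n))) := by
  apply Algebra.adjoin_eq_span_of_subset
  refine Subset.trans ?_ Submodule.subset_span
  intro x hx
  refine Submonoid.closure_induction (fun _ => id) ⟨0, eChar_zero'⟩ ?_ hx
  rintro - - - - ⟨r, rfl⟩ ⟨s, rfl⟩
  exact ⟨r + s, (eChar_mul r s).symm⟩

lemma eCharAlg_separatesPoints (n : ℕ) : (eCharAlg n).SeparatesPoints := by
  intro x y hxy
  obtain ⟨j, hj⟩ : ∃ j, x j ≠ y j := by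
    by_contra h; push_neg at h; exact hxy (funext h)
  refine ⟨_, ⟨eChar (Pi.single j 1), Algebra.subset_adjoin ⟨Pi.single j 1, rfl⟩, rfl⟩, ?_⟩
  dsimp only
  have hx : ∀ z : Torus n, eChar (Pi.single j 1) z = AddCircle.toCircle (z j) := by
    intro z
    rw [eChar_apply, Finset.prod_eq_single j]
    · rw [Pi.single_eq_same, fourier_one]
    · intro i _ hi; rw [Pi.single_eq_of_ne hi, fourier_zero]
    · intro h; exact absurd (Finset.mem_univ j) h
  rw [hx, hx]
  intro h
  replace h := Circle.coe_injective h
  exact hj (AddCircle.injective_toCircle one_ne_zero h)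

lemma span_eChar_closure_eq_top (n : ℕ) :
    (span ℂ (Set.range (eChar (n := n)))).topologicalClosure = ⊤ := by
  rw [← eCharAlg_coe]
  exact congr_arg (Subalgebra.toSubmodule <| StarSubalgebra.toSubalgebra ·)
    (ContinuousMap.starSubalgebra_topologicalClosure_eq_top_of_separatesPoints
      (eCharAlg n) (eCharAlg_separatesPoints n))

lemma span_eChar_dense (n : ℕ) :
    Dense ((span ℂ (Set.range (eChar (n := n))) : Submodule ℂ C(Torus n, ℂ)) :
      Set C(Torus n, ℂ)) := by
  rw [dense_iff_closure_eq, ← Submodule.topologicalClosure_coe, span_eChar_closure_eq_top]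
  rfl

instance : IsProbabilityMeasure (volume : Measure (AddCircle (1:ℝ))) :=
  ⟨by rw [AddCircle.measure_univ]; simp⟩

/-- integrability of continuous functions on the torus -/
lemma integrable_cm (f : C(Torus n, ℂ)) (μ : Measure (Torus n)) [IsFiniteMeasure μ] :
    Integrable f μ :=
  f.continuous.integrable_of_hasCompactSupport ((isClosed_tsupport _).isCompact)

/-- A probability measure with one invariant direction kills a nontrivial character. -/
lemma integral_eChar_eq_zero {r : Fin n → ℤ} {μ : Measure (Torus n)} [IsProbabilityMeasure μ]
    (g : Torus n) (hinv : ∫ x, eChar r (x + g) ∂μ = ∫ x, eChar r x ∂μ)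
    (hg : eChar r g ≠ 1) : ∫ x, eChar r x ∂μ = 0 := by
  have h1 : ∫ x, eChar r (x + g) ∂μ = eChar r g * ∫ x, eChar r x ∂μ := by
    simp_rw [eChar_add, mul_comm (eChar r _) (eChar r g)]
    rw [integral_const_mul]
  rw [h1] at hinv
  have := sub_eq_zero.2 hinv
  rw [← sub_one_mul] at this
  rcases mul_eq_zero.1 this with h | h
  · exact absurd (sub_eq_zero.1 h) hg
  · exact h

/-- The main lemma: a closed subgroup of the torus on which every nontrivial character is
nontrivial is the whole torus. -/
lemma coe_eq_univ_of_char (K : AddSubgroup (Torus n)) (hK : IsClosed (K : Set (Torus n)))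
    (h : ∀ r : Fin n → ℤ, r ≠ 0 → ∃ g ∈ K, eChar r g ≠ 1) :
    (K : Set (Torus n)) = Set.univ := by
  by_contra hne
  obtain ⟨x₀, hx₀⟩ : ∃ x₀, x₀ ∉ (K : Set (Torus n)) := by
    by_contra hh; push_neg at hh; exact hne (Set.eq_univ_of_forall hh)
  haveI : CompactSpace K := isCompact_iff_compactSpace.mp hK.isCompact
  haveI : Nonempty K := ⟨0, K.zero_mem⟩
  haveI : BorelSpace ↥K := Subtype.borelSpace (K : Set (Torus n))
  set μ : Measure K := addHaarMeasure ⊤ with hμ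
  haveI : IsProbabilityMeasure μ := ⟨by
    have hc : ((⊤ : TopologicalSpace.PositiveCompacts K) : Set K) = univ := rfl
    rw [hμ, ← hc]; exact addHaarMeasure_self⟩
  set ν : Measure (Torus n) := μ.map ((↑) : K → Torus n) with hν
  haveI : IsProbabilityMeasure ν :=
    isProbabilityMeasure_map (measurable_subtype_coe.aemeasurable)
  have hmap : ∀ f : C(Torus n, ℂ), ∫ x, f x ∂ν = ∫ x : K, f x ∂μ := fun f =>
    integral_map measurable_subtype_coe.aemeasurable
      f.continuous.aestronglyMeasurable
  have key : ∀ r : Fin n → ℤ, ∫ x, eChar r x ∂ν = ∫ x, eChar r x ∂volume := by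
    intro r
    rcases eq_or_ne r 0 with rfl | hr
    · simp only [eChar_zero', ContinuousMap.one_apply, integral_const, measure_univ,
        ENNReal.toReal_one, one_smul, probReal_univ]
    · obtain ⟨g, hgK, hg⟩ := h r hr
      have invν : ∫ x, eChar r (x + g) ∂ν = ∫ x, eChar r x ∂ν := by
        have h1 : ∫ x, eChar r (x + g) ∂ν = ∫ x : K, eChar r (↑x + g) ∂μ :=
          integral_map measurable_subtype_coe.aemeasurable
            ((eChar r).continuous.comp (continuous_id.add continuous_const)).aestronglyMeasurable
        have h2 : ∫ x : K, eChar r (↑x + g) ∂μ = ∫ x : K, eChar r ↑x ∂μ := by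
          have := integral_add_right_eq_self (μ := μ) (fun x : K => eChar r ↑x) ⟨g, hgK⟩
          simpa using this
        rw [h1, h2, hmap (eChar r)]
      rw [integral_eChar_eq_zero g invν hg,
        integral_eChar_eq_zero g (integral_add_right_eq_self (fun x => eChar r x) g) hg]
  -- equality of integrals on the span of characters
  have hspan : ∀ f ∈ span ℂ (Set.range (eChar (n := n))),
      ∫ x, f x ∂ν = ∫ x, f x ∂volume := by
    intro f hf
    induction hf using Submodule.span_induction with
    | mem f hf => obtain ⟨r, rfl⟩ := hf; exact key r
    | zero => simp
    | add f g _ _ hf hg =>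
      simp only [ContinuousMap.add_apply]
      rw [integral_add (integrable_cm f ν) (integrable_cm g ν),
        integral_add (integrable_cm f volume) (integrable_cm g volume), hf, hg]
    | smul c f _ hf =>
      simp only [ContinuousMap.smul_apply, smul_eq_mul]
      rw [integral_const_mul, integral_const_mul, hf]
  -- equality of integrals for all continuous functions
  have hall : ∀ f : C(Torus n, ℂ), ∫ x, f x ∂ν = ∫ x, f x ∂volume := by
    have lip : ∀ (μ' : Measure (Torus n)) (_ : IsProbabilityMeasure μ'),
        LipschitzWith 1 (fun f : C(Torus n, ℂ) => ∫ x, f x ∂μ') := by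
      intro μ' hμ'
      refine LipschitzWith.of_dist_le_mul fun f g => ?_
      rw [dist_eq_norm, ← integral_sub (integrable_cm f μ') (integrable_cm g μ')]
      calc ‖∫ x, (f x - g x) ∂μ'‖ ≤ (dist f g) * (μ' Set.univ).toReal :=
            norm_integral_le_of_norm_le_const (Filter.Eventually.of_forall fun x => by
              rw [← dist_eq_norm]; exact ContinuousMap.dist_apply_le_dist x)
        _ = 1 * dist f g := by simp [measure_univ]
    have hF : Continuous fun f : C(Torus n, ℂ) => (∫ x, f x ∂ν) - ∫ x, f x ∂volume :=
      ((lip ν inferInstance).continuous).sub ((lip volume inferInstance).continuous)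
    have h0 : ∀ f : C(Torus n, ℂ),
        ((∫ x, f x ∂ν) - ∫ x, f x ∂volume) = (fun _ : C(Torus n, ℂ) => (0:ℂ)) f := by
      intro f
      have := Continuous.ext_on (span_eChar_dense n) hF continuous_const
        (fun f hf => sub_eq_zero.2 (hspan f hf))
      exact congrFun this f
    intro f
    exact sub_eq_zero.1 (h0 f)
  -- construct a bump function vanishing on K but with positive integral
  have hopen : IsOpen ((K : Set (Torus n))ᶜ) := hK.isOpen_compl
  obtain ⟨ε, hε, hball⟩ := Metric.isOpen_iff.1 hopen x₀ hx₀
  set f : Torus n → ℝ := fun x => max 0 (1 - dist x x₀ / ε) with hfdef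
  have hfc : Continuous f :=
    continuous_const.max (continuous_const.sub ((continuous_id.dist continuous_const).div_const ε))
  have hf0 : ∀ x ∈ (K : Set (Torus n)), f x = 0 := by
    intro x hx
    have hd : ε ≤ dist x x₀ := by
      by_contra hlt
      exact (hball (Metric.mem_ball.2 (not_le.1 hlt))) hx
    have : 1 - dist x x₀ / ε ≤ 0 := by
      rw [sub_nonpos]
      exact (one_le_div hε).2 hd
    simp [hfdef, max_eq_left this]
  have hfx₀ : f x₀ = 1 := by simp [hfdef, hε.le]
  set fC : C(Torus n, ℂ) := ⟨fun x => (f x : ℂ), Complex.continuous_ofReal.comp hfc⟩ with hfC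
  have hν0 : ∫ x, fC x ∂ν = 0 := by
    rw [hmap fC]
    have : ∀ x : K, fC ↑x = 0 := fun x => by
      simp only [hfC, ContinuousMap.coe_mk, Complex.ofReal_eq_zero]
      exact hf0 ↑x x.2
    simp [this]
  have hint : Integrable f volume :=
    hfc.integrable_of_hasCompactSupport (isClosed_tsupport f).isCompact
  have hvolpos : 0 < ∫ x, f x ∂(volume : Measure (Torus n)) :=
    hfc.integral_pos_of_hasCompactSupport_nonneg_nonzero
      (isClosed_tsupport f).isCompact (fun x => le_max_left _ _) (by rw [hfx₀]; norm_num)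
  have hre : ∫ x, fC x ∂(volume : Measure (Torus n)) =
      ((∫ x, f x ∂(volume : Measure (Torus n)) : ℝ) : ℂ) := by
    have := (Complex.ofRealCLM.integral_comp_comm hint).symm
    simpa [hfC] using this.symm
  rw [hall fC, hre] at hν0
  have : (∫ x, f x ∂(volume : Measure (Torus n))) = 0 := by exact_mod_cast hν0
  exact hvolpos.ne' this

/-- The projection as an additive monoid homomorphism. -/
def projHom (n : ℕ) : (Fin n → ℝ) →+ Torus n where
  toFun := torusProj n
  map_zero' := rfl
  map_add' x y := rfl

/-- The linear functional given by an integer vector. -/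
def rFun (r : Fin n → ℤ) : (Fin n → ℝ) →ₗ[ℝ] ℝ where
  toFun x := ∑ j, (r j : ℝ) * x j
  map_add' x y := by
    simp only [Pi.add_apply, mul_add]
    rw [Finset.sum_add_distrib]
  map_smul' c x := by
    simp only [Pi.smul_apply, smul_eq_mul, RingHom.id_apply, Finset.mul_sum]
    exact Finset.sum_congr rfl fun j _ => by ring

lemma torusProj_isOpenQuotientMap (n : ℕ) : IsOpenQuotientMap (torusProj n) := by
  have : torusProj n = Pi.map (fun _ (x : ℝ) => (x : AddCircle (1:ℝ))) := rfl
  rw [this]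
  exact IsOpenQuotientMap.piMap fun i => QuotientAddGroup.isOpenQuotientMap_mk

/-- The main torus statement. -/
theorem dense_torus_iff (a : Fin m → (Fin n → ℝ)) :
    Dense (torusProj n '' ((Submodule.span ℝ (Set.range a) : Submodule ℝ (Fin n → ℝ)) :
        Set (Fin n → ℝ))) ↔
      ¬∃ r : Fin n → ℤ, r ≠ 0 ∧ ∀ i, ∑ j, (r j : ℝ) * a i j = 0 := by
  set V := Submodule.span ℝ (Set.range a) with hV
  constructor
  · rintro hD ⟨r, hr0, hr⟩
    have h1 : ∀ x ∈ torusProj n '' (V : Set (Fin n → ℝ)), eChar r x = 1 := by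
      rintro - ⟨v, hv, rfl⟩
      have hv0 : ∑ j, (r j : ℝ) * v j = 0 := by
        have hle : V ≤ LinearMap.ker (rFun r) := by
          rw [hV, Submodule.span_le]
          rintro - ⟨i, rfl⟩
          exact LinearMap.mem_ker.2 (hr i)
        exact hle hv
      rw [eChar_proj, hv0]
      simp
    have hall : ∀ x : Torus n, eChar r x = 1 := by
      have hclosed : IsClosed {x : Torus n | eChar r x = 1} :=
        isClosed_eq (eChar r).continuous continuous_const
      intro x
      have hsub : closure (torusProj n '' (V : Set (Fin n → ℝ))) ⊆ {x | eChar r x = 1} :=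
        closure_minimal h1 hclosed
      have hx : x ∈ closure (torusProj n '' (V : Set (Fin n → ℝ))) := by
        rw [hD.closure_eq]; trivial
      exact hsub hx
    obtain ⟨j₀, hj₀⟩ : ∃ j, r j ≠ 0 := by
      by_contra hh; push_neg at hh; exact hr0 (funext hh)
    set y : Fin n → ℝ := Pi.single j₀ 1 with hydef
    have hy : ∑ k, (r k : ℝ) * y k = r j₀ := by
      rw [hydef, Finset.sum_eq_single j₀]
      · simp
      · intro b _ hb; simp [Pi.single_eq_of_ne hb]
      · simp
    have hyne : ∑ k, (r k : ℝ) * y k ≠ 0 := by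
      rw [hy]; exact_mod_cast hj₀
    have hhalf := sum_smul_half hyne
    have := hall (torusProj n ((1 / (2 * ∑ k, (r k:ℝ) * y k)) • y))
    rw [eChar_proj_half hhalf] at this
    norm_num at this
  · intro hno
    have hno' : ∀ r : Fin n → ℤ, r ≠ 0 → ∃ i, ∑ j, (r j : ℝ) * a i j ≠ 0 := by
      intro r hr
      by_contra hh; push_neg at hh
      exact hno ⟨r, hr, hh⟩
    set M : AddSubgroup (Torus n) := AddSubgroup.map (projHom n) V.toAddSubgroup with hM
    have hMcoe : (M : Set (Torus n)) = torusProj n '' (V : Set (Fin n → ℝ)) := by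
      rw [hM, AddSubgroup.coe_map]
      rfl
    set K := M.topologicalClosure with hKdef
    have hKcoe : (K : Set (Torus n)) = closure (torusProj n '' (V : Set (Fin n → ℝ))) := by
      rw [hKdef, AddSubgroup.topologicalClosure_coe, hMcoe]
    have hchar : ∀ r : Fin n → ℤ, r ≠ 0 → ∃ g ∈ K, eChar r g ≠ 1 := by
      intro r hr
      obtain ⟨i, hi⟩ := hno' r hr
      refine ⟨torusProj n ((1 / (2 * ∑ k, (r k:ℝ) * a i k)) • a i), ?_, ?_⟩
      · apply M.le_topologicalClosure
        rw [hM]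
        exact ⟨_, V.smul_mem _ (Submodule.subset_span ⟨i, rfl⟩), rfl⟩
      · rw [eChar_proj_half (sum_smul_half hi)]
        norm_num
    have huniv := coe_eq_univ_of_char K (M.isClosed_topologicalClosure) hchar
    rw [dense_iff_closure_eq, ← hKcoe, huniv]

/-- The set in the real statement is the preimage of the torus image. -/
lemma set_eq_preimage (a : Fin m → (Fin n → ℝ)) :
    {x : Fin n → ℝ | ∃ (t : Fin m → ℝ) (p : Fin n → ℤ),
        x = (∑ i, t i • a i) - fun j => (p j : ℝ)} =
      torusProj n ⁻¹' (torusProj n ''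
        ((Submodule.span ℝ (Set.range a) : Submodule ℝ (Fin n → ℝ)) : Set (Fin n → ℝ))) := by
  ext x
  simp only [Set.mem_setOf_eq, Set.mem_preimage, Set.mem_image, SetLike.mem_coe]
  constructor
  · rintro ⟨t, p, rfl⟩
    refine ⟨∑ i, t i • a i, Submodule.sum_mem _ fun i _ =>
      Submodule.smul_mem _ _ (Submodule.subset_span ⟨i, rfl⟩), ?_⟩
    funext j
    show ((∑ i, t i • a i) j : AddCircle (1:ℝ)) =
      (((∑ i, t i • a i) - fun j => (p j : ℝ)) j : AddCircle (1:ℝ))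
    rw [QuotientAddGroup.eq]
    refine AddSubgroup.mem_zmultiples_iff.2 ⟨-p j, ?_⟩
    simp [Pi.sub_apply]
    ring
  · rintro ⟨v, hv, hvx⟩
    have hv' : v ∈ Submodule.span ℝ (Set.range a) := hv
    obtain ⟨t, ht⟩ := (mem_span_range_iff_exists_fun ℝ).1 hv'
    choose q hq using fun j => AddSubgroup.mem_zmultiples_iff.1
      ((QuotientAddGroup.eq).1 (congrFun hvx j))
    refine ⟨t, fun j => -q j, ?_⟩
    funext j
    have := hq j
    simp only [zsmul_eq_mul, mul_one] at this
    simp only [Pi.sub_apply, ht]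
    push_cast
    linarith

end DenseAux


/-- The set of vectors `∑ tᵢ aᵢ - p` (with real `tᵢ` and integer `p`) is dense in `ℝⁿ` iff
no nonzero integer vector is orthogonal to all the `aᵢ`; equivalently, the projection to the
torus of the linear span of the `aᵢ` is dense iff the same condition holds. -/
theorem dense_iff_no_resonance {n m : ℕ} (a : Fin m → (Fin n → ℝ)) :
    (Dense {x : Fin n → ℝ | ∃ (t : Fin m → ℝ) (p : Fin n → ℤ),
        x = (∑ i, t i • a i) - fun j => (p j : ℝ)} ↔
      ¬∃ r : Fin n → ℤ, r ≠ 0 ∧ ∀ i, ∑ j, (r j : ℝ) * a i j = 0) ∧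
    (Dense (torusProj n '' ((Submodule.span ℝ (Set.range a) : Submodule ℝ (Fin n → ℝ)) :
        Set (Fin n → ℝ))) ↔
      ¬∃ r : Fin n → ℤ, r ≠ 0 ∧ ∀ i, ∑ j, (r j : ℝ) * a i j = 0) := by
  refine ⟨?_, DenseAux.dense_torus_iff a⟩
  rw [DenseAux.set_eq_preimage a,
    (DenseAux.torusProj_isOpenQuotientMap n).dense_preimage_iff]
  exact DenseAux.dense_torus_iff a
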